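/- Let B be a commutative ring, let a, b, c ∈ B, and let A = B[X,Y]/(aX² + bXY + cY² − 1). Then A is a smooth B-algebra if and only if both a and c belong to the radical of the ideal (2, b) of B. -/

import Mathlib

open MvPolynomial

/-- The polynomial `a X² + b XY + c Y² - 1` in `B[X,Y]`. -/
noncomputable abbrev quadPoly {B : Type*} [CommRing B] (a b c : B) :
    MvPolynomial (Fin 2) B :=
  C a * X 0 ^ 2 + C b * X 0 * X 1 + C c * X 1 ^ 2 - 1

/-- The ring `A = B[X,Y]/(a X² + b XY + c Y² - 1)`. -/
noncomputable abbrev QuadAlg (B : Type*) [CommRing B] (a b c : B) :=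
  MvPolynomial (Fin 2) B ⧸ Ideal.span {quadPoly a b c}

open KaehlerDifferential

section Aux

variable {B : Type u} [CommRing B] (a b c : B)

lemma quad_pderiv0 : pderiv 0 (quadPoly a b c) = C (2*a) * X 0 + C b * X 1 := by
  simp [quadPoly, pderiv_X, Pi.single_apply, map_mul, map_ofNat]; ring

lemma quad_pderiv1 : pderiv 1 (quadPoly a b c) = C b * X 0 + C (2*c) * X 1 := by
  simp [quadPoly, pderiv_X, Pi.single_apply, map_mul, map_ofNat]; ring

lemma ker_algebraMap_eq :
    RingHom.ker (algebraMap (MvPolynomial (Fin 2) B) (QuadAlg B a b c)) =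
      Ideal.span {quadPoly a b c} := by
  rw [Ideal.Quotient.algebraMap_eq, Ideal.mk_ker]

lemma surj_quad :
    Function.Surjective (algebraMap (MvPolynomial (Fin 2) B) (QuadAlg B a b c)) := by
  rw [Ideal.Quotient.algebraMap_eq]
  exact Ideal.Quotient.mk_surjective

lemma jacobian_top (ha : a ∈ (Ideal.span {(2 : B), b}).radical)
    (hc : c ∈ (Ideal.span {(2 : B), b}).radical) :
    Ideal.span {quadPoly a b c, pderiv 0 (quadPoly a b c), pderiv 1 (quadPoly a b c)} = ⊤ := by
  set f := quadPoly a b c with hf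
  set J := Ideal.span {f, pderiv 0 f, pderiv 1 f} with hJ
  have hfJ : f ∈ J := Ideal.subset_span (by simp)
  have hfXJ : pderiv 0 f ∈ J := Ideal.subset_span (by simp)
  have hfYJ : pderiv 1 f ∈ J := Ideal.subset_span (by simp)
  have h2 : (C 2 : MvPolynomial (Fin 2) B) ∈ J := by
    have : (C 2 : MvPolynomial (Fin 2) B) =
        X 0 * pderiv 0 f + X 1 * pderiv 1 f - C 2 * f := by
      rw [quad_pderiv0, quad_pderiv1, hf]
      push_cast [map_mul, map_ofNat]
      ring
    rw [this]
    exact sub_mem (add_mem (J.mul_mem_left _ hfXJ) (J.mul_mem_left _ hfYJ))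
      (J.mul_mem_left _ hfJ)
  have hb : (C b : MvPolynomial (Fin 2) B) ∈ J := by
    have : (C b : MvPolynomial (Fin 2) B) =
        pderiv 0 f * pderiv 1 f - C a * X 0 * pderiv 1 f - C c * X 1 * pderiv 0 f
          - C b * f := by
      rw [quad_pderiv0, quad_pderiv1, hf]
      push_cast [map_mul, map_ofNat]
      ring
    rw [this]
    exact sub_mem (sub_mem (sub_mem (J.mul_mem_right _ hfXJ) (J.mul_mem_left _ hfYJ))
      (J.mul_mem_left _ hfXJ)) (J.mul_mem_left _ hfJ)
  -- now 1 ∈ J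
  rw [Ideal.eq_top_iff_one]
  -- C of span {2,b} is in J
  have hCspan : ∀ x ∈ Ideal.span {(2:B), b}, (C x : MvPolynomial (Fin 2) B) ∈ J := by
    intro x hx
    obtain ⟨u, v, huv⟩ := Ideal.mem_span_pair.mp hx
    rw [← huv, map_add, map_mul, map_mul]
    exact add_mem (J.mul_mem_left _ h2) (J.mul_mem_left _ hb)
  obtain ⟨n, hn⟩ := ha
  obtain ⟨m, hm⟩ := hc
  -- work in quotient
  by_contra h1
  have hQ : ∀ x ∈ J, Ideal.Quotient.mk J x = 0 := fun x hx ↦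
    (Ideal.Quotient.eq_zero_iff_mem).mpr hx
  set π := Ideal.Quotient.mk J
  have hna : IsNilpotent (π (C a)) := ⟨n, by rw [← map_pow, ← map_pow]; exact hQ _ (hCspan _ hn)⟩
  have hnc : IsNilpotent (π (C c)) := ⟨m, by rw [← map_pow, ← map_pow]; exact hQ _ (hCspan _ hm)⟩
  have key : (1 : MvPolynomial (Fin 2) B ⧸ J) =
      π (C a) * π (X 0 ^ 2) + π (C c) * π (X 1 ^ 2) := by
    have : (1 : MvPolynomial (Fin 2) B) =
        C a * X 0 ^ 2 + C c * X 1 ^ 2 + (C b * (X 0 * X 1) - f) := by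
      rw [hf]; ring
    calc (1 : MvPolynomial (Fin 2) B ⧸ J) = π 1 := rfl
      _ = π (C a * X 0 ^ 2) + π (C c * X 1 ^ 2) + (π (C b) * π (X 0 * X 1) - π f) := by
          rw [this]; push_cast [map_add, map_sub, map_mul]; ring
      _ = π (C a) * π (X 0 ^ 2) + π (C c) * π (X 1 ^ 2) := by
          rw [hQ _ hb, hQ _ hfJ]; push_cast [map_mul]; ring
  have : IsNilpotent (1 : MvPolynomial (Fin 2) B ⧸ J) := by
    rw [key]
    exact (Commute.all _ _).isNilpotent_add ((Commute.all _ _).isNilpotent_mul_right hna) ((Commute.all _ _).isNilpotent_mul_right hnc)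
  obtain ⟨k, hk⟩ := this
  rw [one_pow] at hk
  exact h1 (by rw [← Ideal.Quotient.eq_zero_iff_mem]; exact hk ▸ rfl)

lemma D_eq_pderiv (f : MvPolynomial (Fin 2) B) :
    D B (MvPolynomial (Fin 2) B) f =
      pderiv 0 f • D B _ (X 0) + pderiv 1 f • D B _ (X 1) := by
  apply (mvPolynomialBasis B (Fin 2)).repr.injective
  ext i
  fin_cases i <;>
    simp [mvPolynomialBasis_repr_apply, Finsupp.single_apply]

set_option maxHeartbeats 1600000 in
lemma key_equation_of_formallySmooth
    (h : Algebra.FormallySmooth B (QuadAlg B a b c)) :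
    ∃ g₀ g₁ q : MvPolynomial (Fin 2) B,
      (pderiv 0 (quadPoly a b c) * g₀ + pderiv 1 (quadPoly a b c) * g₁ - 1
          - q * quadPoly a b c) * quadPoly a b c = 0 := by
  classical
  set P := MvPolynomial (Fin 2) B
  set S := QuadAlg B a b c
  set f : P := quadPoly a b c with hfdef
  set K := RingHom.ker (algebraMap P S) with hKdef
  have hK : K = Ideal.span {f} := ker_algebraMap_eq a b c
  have hfK : f ∈ K := hK ▸ Ideal.subset_span rfl
  have hFS : Algebra.FormallySmooth B P :=
    Algebra.FormallySmooth.of_equiv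
      (MvPolynomial.renameEquiv B (Equiv.ulift.{0} (α := Fin 2)))
  obtain ⟨l, hl⟩ :=
    (Algebra.FormallySmooth.iff_split_injection (surj_quad a b c)).mp h
  -- get the images of the basis vectors
  obtain ⟨⟨y₀, hy₀⟩, hly₀⟩ := K.toCotangent_surjective (l (1 ⊗ₜ[P] D B P (X 0)))
  obtain ⟨⟨y₁, hy₁⟩, hly₁⟩ := K.toCotangent_surjective (l (1 ⊗ₜ[P] D B P (X 1)))
  obtain ⟨g₀, hg₀⟩ := Ideal.mem_span_singleton'.mp (hK ▸ hy₀)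
  obtain ⟨g₁, hg₁⟩ := Ideal.mem_span_singleton'.mp (hK ▸ hy₁)
  have main : K.toCotangent ⟨f, hfK⟩ =
      K.toCotangent ⟨(pderiv 0 f * g₀ + pderiv 1 f * g₁) * f,
        K.mul_mem_left _ hfK⟩ := by
    conv_lhs => rw [← LinearMap.id_apply (R := P) (K.toCotangent ⟨f, hfK⟩), ← hl]
    rw [LinearMap.comp_apply, kerCotangentToTensor_toCotangent]
    show l ((1 : S) ⊗ₜ[P] D B P f) = _
    rw [D_eq_pderiv, TensorProduct.tmul_add, TensorProduct.tmul_smul,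
      TensorProduct.tmul_smul, map_add, map_smul, map_smul, ← hly₀, ← hly₁,
      ← map_smul, ← map_smul, ← map_add]
    congr 1
    refine Subtype.ext ?_
    show pderiv 0 f * y₀ + pderiv 1 f * y₁ = _
    rw [← hg₀, ← hg₁]
    ring
  rw [Ideal.toCotangent_eq] at main
  have : f - (pderiv 0 f * g₀ + pderiv 1 f * g₁) * f ∈ Ideal.span {f ^ 2} := by
    rw [← Ideal.span_singleton_pow, ← hK]
    exact main
  obtain ⟨q, hq⟩ := Ideal.mem_span_singleton'.mp this
  exact ⟨g₀, g₁, -q, by linear_combination hq⟩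

lemma quad_map {k : Type*} [CommRing k] (ρ : B →+* k) :
    MvPolynomial.map ρ (quadPoly a b c) = quadPoly (ρ a) (ρ b) (ρ c) := by
  simp [quadPoly]

set_option maxHeartbeats 1600000 in
lemma a_mem_radical_of_key_equation
    (hkey : ∃ g₀ g₁ q : MvPolynomial (Fin 2) B,
      (pderiv 0 (quadPoly a b c) * g₀ + pderiv 1 (quadPoly a b c) * g₁ - 1
          - q * quadPoly a b c) * quadPoly a b c = 0) :
    a ∈ (Ideal.span {(2 : B), b}).radical := by
  obtain ⟨g₀, g₁, q, hE⟩ := hkey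
  rw [Ideal.radical_eq_sInf]
  refine Ideal.mem_sInf.mpr ?_
  rintro p ⟨hle, hp⟩
  by_contra ha
  have h2p : (2 : B) ∈ p := hle (Ideal.subset_span (by simp))
  have hbp : b ∈ p := hle (Ideal.subset_span (by simp))
  -- pass to an algebraically closed field
  letI : IsDomain (B ⧸ p) := Ideal.Quotient.isDomain p
  set L := FractionRing (B ⧸ p)
  set k := AlgebraicClosure L
  set ρ : B →+* k :=
    ((algebraMap L k).comp (algebraMap (B ⧸ p) L)).comp (Ideal.Quotient.mk p) with hρ
  have hinj1 : Function.Injective (algebraMap (B ⧸ p) L) :=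
    IsFractionRing.injective (B ⧸ p) L
  have hinj2 : Function.Injective (algebraMap L k) := RingHom.injective _
  have hρa : ρ a ≠ 0 := by
    intro h
    apply ha
    rw [← Ideal.Quotient.eq_zero_iff_mem]
    apply hinj1
    apply hinj2
    rw [map_zero, map_zero]
    simpa [hρ] using h
  have hρ2 : ρ 2 = 0 := by
    simp [hρ, Ideal.Quotient.eq_zero_iff_mem.mpr h2p]
  have hρb : ρ b = 0 := by
    simp [hρ, Ideal.Quotient.eq_zero_iff_mem.mpr hbp]
  -- map the equation
  set F : MvPolynomial (Fin 2) k := C (ρ a) * X 0 ^ 2 + C (ρ c) * X 1 ^ 2 - 1 with hF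
  have hmapf : MvPolynomial.map ρ (quadPoly a b c) = F := by
    rw [quad_map, hF, hρb]; unfold quadPoly; rw [C_0]; ring
  have hmap0 : MvPolynomial.map ρ (pderiv 0 (quadPoly a b c)) = 0 := by
    rw [quad_pderiv0]
    simp [hρb, map_mul, hρ2]
  have hmap1 : MvPolynomial.map ρ (pderiv 1 (quadPoly a b c)) = 0 := by
    rw [quad_pderiv1]
    simp [hρb, map_mul, hρ2]
  have hEk : ((-1 : MvPolynomial (Fin 2) k) - MvPolynomial.map ρ q * F) * F = 0 := by
    have := congrArg (MvPolynomial.map ρ) hE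
    rw [map_mul, map_sub, map_sub, map_add, map_mul, map_mul, map_mul, map_one,
      hmapf, hmap0, hmap1, map_zero] at this
    simpa using this
  -- k[X,Y] is a domain
  have hFne : F ≠ 0 := by
    intro h0
    have := congrArg (eval (fun _ ↦ (0 : k))) h0
    simp [hF] at this
  have hunit : (-1 : MvPolynomial (Fin 2) k) - MvPolynomial.map ρ q * F = 0 :=
    (mul_eq_zero.mp hEk).resolve_right hFne
  -- evaluate at a root
  obtain ⟨x, hx⟩ := IsAlgClosed.exists_pow_nat_eq (k := k) (ρ a)⁻¹ (n := 2) (by norm_num)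
  have := congrArg (eval (fun i : Fin 2 ↦ if i = 0 then x else 0)) hunit
  simp [hF, hx, mul_inv_cancel₀ hρa] at this

lemma quad_rename_swap :
    rename (Equiv.swap (0 : Fin 2) 1) (quadPoly a b c) = quadPoly c b a := by
  simp [quadPoly, Equiv.swap_apply_def]
  ring

noncomputable def quadSwapEquiv : QuadAlg B a b c ≃ₐ[B] QuadAlg B c b a :=
  Ideal.quotientEquivAlg _ _ (renameEquiv B (Equiv.swap (0 : Fin 2) 1))
    (by
      rw [Ideal.map_span, Set.image_singleton]
      congr 1
      exact congrArg _ (quad_rename_swap a b c).symm)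

instance : Algebra.FinitePresentation B (QuadAlg B a b c) :=
  Algebra.FinitePresentation.quotient ⟨{quadPoly a b c}, by simp⟩

set_option maxHeartbeats 1600000 in
lemma formallySmooth_of_jacobian_top
    (hJ : Ideal.span {quadPoly a b c, pderiv 0 (quadPoly a b c),
        pderiv 1 (quadPoly a b c)} = ⊤) :
    Algebra.FormallySmooth B (QuadAlg B a b c) := by
  classical
  set P := MvPolynomial (Fin 2) B
  set S := QuadAlg B a b c
  set f : P := quadPoly a b c with hfdef
  -- coefficients
  have h1 : (1 : P) ∈ Ideal.span {f, pderiv 0 f, pderiv 1 f} := hJ ▸ Submodule.mem_top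
  rw [show ({f, pderiv 0 f, pderiv 1 f} : Set P) =
      insert f {pderiv 0 f, pderiv 1 f} from rfl, Ideal.mem_span_insert] at h1
  obtain ⟨w, z, hz, hwz⟩ := h1
  obtain ⟨u, v, huv⟩ := Ideal.mem_span_pair.mp hz
  -- 1 = w * f + (u * pderiv 0 f + v * pderiv 1 f)
  set K := RingHom.ker (algebraMap P S) with hKdef
  have hK : K = Ideal.span {f} := ker_algebraMap_eq a b c
  have hfK : f ∈ K := hK ▸ Ideal.subset_span rfl
  have hmem : ∀ p : P, p * f ∈ K := fun p ↦ K.mul_mem_left p hfK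
  -- the P-linear map Ω → K.Cotangent
  set t : Fin 2 → K.Cotangent :=
    ![K.toCotangent ⟨u * f, hmem u⟩, K.toCotangent ⟨v * f, hmem v⟩] with ht
  set Φ : Ω[P⁄B] →ₗ[P] K.Cotangent :=
    (mvPolynomialBasis B (Fin 2)).constr ℕ t with hΦ
  -- the map S →ₗ[P] Ω →ₗ[P] K.Cotangent
  have hsmul0 : ∀ p ∈ Ideal.span {f},
      p • Φ = (0 : Ω[P⁄B] →ₗ[P] K.Cotangent) := by
    intro p hp
    refine LinearMap.ext fun ω ↦ ?_
    show p • Φ ω = 0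
    exact Ideal.Cotangent.smul_eq_zero_of_mem (hK ▸ hp) _
  set ψ : S →ₗ[P] Ω[P⁄B] →ₗ[P] K.Cotangent :=
    Submodule.liftQ _ (LinearMap.toSpanSingleton P _ Φ)
      (by intro p hp; exact LinearMap.mem_ker.mpr (hsmul0 p hp)) with hψ
  have hFS : Algebra.FormallySmooth B P :=
    Algebra.FormallySmooth.of_equiv
      (MvPolynomial.renameEquiv B (Equiv.ulift.{0} (α := Fin 2)))
  refine (Algebra.FormallySmooth.iff_split_injection (surj_quad a b c)).mpr
    ⟨TensorProduct.lift ψ, ?_⟩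
  -- check retraction on generators
  apply LinearMap.ext
  intro x
  obtain ⟨⟨y, hy⟩, rfl⟩ := K.toCotangent_surjective x
  obtain ⟨p, rfl⟩ : ∃ p, p * f = y := by
    obtain ⟨p, hp⟩ := Ideal.mem_span_singleton'.mp (hK ▸ hy)
    exact ⟨p, hp⟩
  have hgen : (⟨p * f, hy⟩ : K) = p • ⟨f, hfK⟩ := by
    ext; rfl

  rw [LinearMap.comp_apply, LinearMap.id_apply, hgen, map_smul, map_smul,
    kerCotangentToTensor_toCotangent]
  -- compute on the generator f
  have hψ1 : ∀ ω, TensorProduct.lift ψ ((1 : S) ⊗ₜ[P] ω) = Φ ω := by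
    intro ω
    have h1S : (1 : S) = Submodule.Quotient.mk (1 : P) := rfl
    rw [TensorProduct.lift.tmul, hψ, h1S, Submodule.liftQ_apply]
    show (1 : P) • Φ ω = Φ ω
    exact one_smul P (Φ ω)
  rw [map_smul, hψ1]
  have hDf : Φ (D B P f) = K.toCotangent ⟨(pderiv 0 f * u + pderiv 1 f * v) * f, hmem _⟩ := by
    rw [D_eq_pderiv, map_add, map_smul, map_smul, hΦ]
    have h0 : (mvPolynomialBasis B (Fin 2)).constr ℕ t (D B P (X 0)) = t 0 := by
      rw [← mvPolynomialBasis_apply B (Fin 2) 0]; exact Module.Basis.constr_basis _ _ _ _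
    have h1 : (mvPolynomialBasis B (Fin 2)).constr ℕ t (D B P (X 1)) = t 1 := by
      rw [← mvPolynomialBasis_apply B (Fin 2) 1]; exact Module.Basis.constr_basis _ _ _ _
    rw [h0, h1, ht]
    show pderiv 0 f • K.toCotangent ⟨u * f, _⟩ + pderiv 1 f • K.toCotangent ⟨v * f, _⟩ = _
    rw [← map_smul, ← map_smul, ← map_add]
    congr 1
    ext
    simp [smul_eq_mul]
    ring
  rw [hDf]
  congr 1
  rw [Ideal.toCotangent_eq]
  show (pderiv 0 f * u + pderiv 1 f * v) * f - f ∈ K ^ 2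
  have heq : (pderiv 0 f * u + pderiv 1 f * v) * f - f = (-w) * f ^ 2 := by
    linear_combination (-f) * hwz + f * huv
  rw [heq, hK, Ideal.span_singleton_pow]
  exact Ideal.mem_span_singleton'.mpr ⟨-w, rfl⟩


end Aux

theorem smooth_iff_mem_radical (B : Type*) [CommRing B] (a b c : B) :
    Algebra.Smooth B (QuadAlg B a b c) ↔
      a ∈ (Ideal.span {(2 : B), b}).radical ∧ c ∈ (Ideal.span {(2 : B), b}).radical := by
  constructor
  · intro h
    have hc : Algebra.Smooth B (QuadAlg B c b a) :=
      Algebra.Smooth.of_equiv (quadSwapEquiv a b c)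
    exact ⟨a_mem_radical_of_key_equation a b c
        (key_equation_of_formallySmooth a b c h.formallySmooth),
      a_mem_radical_of_key_equation c b a
        (key_equation_of_formallySmooth c b a hc.formallySmooth)⟩
  · rintro ⟨ha, hc⟩
    exact ⟨formallySmooth_of_jacobian_top a b c (jacobian_top a b c ha hc), inferInstance⟩
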